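/- Let ν be a strongly Rayleigh function on the ℓ-element subsets of {1,…,n}. Then for every ε > 0 there exists a strongly Rayleigh function ν̃ on the ℓ-element subsets of {1,…,n} such that ν̃(S) > 0 for every ℓ-element set S and |ν(S) − ν̃(S)| ≤ ε for every ℓ-element set S. -/

import Mathlib

open Finset Polynomial

/-- A function `ν` assigning a nonnegative real to each `ℓ`-element subset of `{1,…,n}`
is strongly Rayleigh if its generating polynomial
`g_ν(z) = Σ_{|S|=ℓ} ν(S)·Π_{i∈S} z_i` has no complex zero with all coordinates in the
open upper half plane. -/
def StronglyRayleigh (n ℓ : ℕ) (ν : Finset (Fin n) → ℝ) : Prop :=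
  (∀ S : Finset (Fin n), S.card = ℓ → 0 ≤ ν S) ∧
  ∀ z : Fin n → ℂ, (∀ i, 0 < (z i).im) →
    (∑ S ∈ Finset.powersetCard ℓ (Finset.univ : Finset (Fin n)),
      (ν S : ℂ) * ∏ i ∈ S, z i) ≠ 0

/-- any strongly Rayleigh `ν` on `ℓ`-subsets can be approximated within `ε`
by a strongly Rayleigh `ν̃` of full support. -/

private lemma gl_core : ∀ (N : ℕ) (p : ℂ[X]), p.natDegree ≤ N →
    (∀ u : ℂ, 0 < u.im → p.eval u ≠ 0) → ∀ u : ℂ, 0 < u.im →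
    derivative p = 0 ∨ ((derivative p).eval u / p.eval u).im < 0 := by
  intro N
  induction N with
  | zero =>
    intro p hp _ u _
    left
    rw [eq_C_of_natDegree_eq_zero (Nat.le_zero.mp hp), derivative_C]
  | succ N ih =>
    intro p hdeg hnv u hu
    by_cases h0 : p.natDegree = 0
    · left; rw [eq_C_of_natDegree_eq_zero h0, derivative_C]
    · right
      have hpne : p ≠ 0 := fun h => hnv Complex.I (by simp) (by simp [h])
      have hdeg0 : p.degree ≠ 0 := by
        rw [degree_eq_natDegree hpne]
        exact_mod_cast fun h => h0 (by exact_mod_cast h)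
      obtain ⟨r, hr⟩ := Complex.isAlgClosed.exists_root p hdeg0
      obtain ⟨q, hq⟩ := dvd_iff_isRoot.mpr hr
      have hrim : r.im ≤ 0 := by
        by_contra h
        exact hnv r (lt_of_not_ge h) hr
      have hur : u - r ≠ 0 := by
        intro h
        have : u.im - r.im = 0 := by rw [← Complex.sub_im, h]; rfl
        linarith
      have hqnv : ∀ v : ℂ, 0 < v.im → q.eval v ≠ 0 := by
        intro v hv hqv
        exact hnv v hv (by rw [hq]; simp [hqv])
      have hqne : q ≠ 0 := fun h => hqnv Complex.I (by simp) (by simp [h])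
      have hqdeg : q.natDegree ≤ N := by
        have := natDegree_mul (X_sub_C_ne_zero r) hqne
        rw [← hq, natDegree_X_sub_C] at this
        omega
      have hpu : p.eval u ≠ 0 := hnv u hu
      have hqu : q.eval u ≠ 0 := hqnv u hu
      have key : (derivative p).eval u / p.eval u
          = (u - r)⁻¹ + (derivative q).eval u / q.eval u := by
        rw [hq, derivative_mul]
        simp only [derivative_sub, derivative_X, derivative_C, sub_zero, one_mul,
          eval_add, eval_mul, eval_sub, eval_X, eval_C]
        field_simp
      have hinv : ((u - r)⁻¹).im < 0 := by
        rw [Complex.inv_im]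
        apply div_neg_of_neg_of_pos
        · rw [Complex.sub_im]; linarith
        · exact Complex.normSq_pos.mpr hur
      rcases ih q hqdeg hqnv u hu with h | h
      · rw [key, h]
        simpa using hinv
      · rw [key, Complex.add_im]
        linarith

private lemma gl_deriv (p : ℂ[X]) (h0 : p.natDegree ≠ 0)
    (hnv : ∀ u : ℂ, 0 < u.im → p.eval u ≠ 0) :
    ∀ u : ℂ, 0 < u.im → (derivative p).eval u ≠ 0 := by
  intro u hu
  rcases gl_core p.natDegree p le_rfl hnv u hu with h | h
  · exact absurd (natDegree_eq_zero_of_derivative_eq_zero h) h0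
  · intro hz
    rw [hz, zero_div] at h
    simp at h

private lemma gl_chain : ∀ (k : ℕ) (p : ℂ[X]) (m : ℕ), k ≤ m → p.natDegree ≤ m →
    p.coeff m ≠ 0 → (∀ u : ℂ, 0 < u.im → p.eval u ≠ 0) →
    (derivative^[k] p).natDegree ≤ m - k ∧ (derivative^[k] p).coeff (m - k) ≠ 0 ∧
      ∀ u : ℂ, 0 < u.im → (derivative^[k] p).eval u ≠ 0 := by
  intro k
  induction k with
  | zero => intro p m _ h1 h2 h3; simpa using ⟨h1, h2, h3⟩
  | succ k ih =>
    intro p m hkm hdeg hc hnv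
    obtain ⟨h1, h2, h3⟩ := ih p m (by omega) hdeg hc hnv
    rw [Function.iterate_succ_apply']
    set q := derivative^[k] p with hqdef
    have hnd : q.natDegree = m - k := le_antisymm h1 (le_natDegree_of_ne_zero h2)
    have hmk : 1 ≤ m - k := by omega
    have hq0 : q.natDegree ≠ 0 := by omega
    refine ⟨?_, ?_, gl_deriv q hq0 h3⟩
    · calc (derivative q).natDegree ≤ q.natDegree - 1 := natDegree_derivative_le q
        _ ≤ m - (k + 1) := by omega
    · rw [coeff_derivative]
      have e1 : m - (k + 1) + 1 = m - k := by omega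
      rw [e1]
      refine mul_ne_zero h2 ?_
      exact_mod_cast Nat.succ_ne_zero (m - (k + 1))

private lemma fstable (n ℓ : ℕ) (ν : Finset (Fin n) → ℝ)
    (hν : StronglyRayleigh n ℓ ν) (θ : ℝ) (hθ0 : 0 < θ) (hθ1 : θ < 1)
    (w : Fin n → ℂ) (hw : ∀ i, 0 < (w i).im) (u : ℂ) (hu : 0 < u.im) :
    (∑ S ∈ Finset.powersetCard ℓ (Finset.univ : Finset (Fin n)),
      (ν S : ℂ) * ∏ i, ((if i ∈ S then (θ:ℂ) else 1) * u + w i)) ≠ 0 := by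
  set b : ℝ := (1+θ)*u.re/((1-θ)*u.im) with hb
  set lam : ℂ := (b:ℂ) + Complex.I with hlam
  have hlam_im : lam.im = 1 := by simp [hlam]
  have hlam_re : lam.re = b := by simp [hlam]
  have hlamne : lam ≠ 0 := by
    intro h
    have := congrArg Complex.im h
    rw [hlam_im] at this
    simp at this
  have hden : ∀ i, u + w i ≠ 0 := by
    intro i h
    have := congrArg Complex.im h
    simp only [Complex.add_im, Complex.zero_im] at this
    have := hw i
    linarith
  set zp : Fin n → ℂ := fun i => lam * (((θ:ℂ) * u + w i) / (u + w i)) with hzp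
  have hkey : ∀ i, 0 < (zp i).im := by
    intro i
    have hns : 0 < Complex.normSq (u + w i) := Complex.normSq_pos.mpr (hden i)
    have h1 : zp i = (lam * (((θ:ℂ) * u + w i) * (starRingEnd ℂ) (u + w i)))
        * (((Complex.normSq (u + w i))⁻¹ : ℝ) : ℂ) := by
      show lam * (((θ:ℂ) * u + w i) / (u + w i)) = _
      rw [div_eq_mul_inv, Complex.inv_def, Complex.ofReal_inv]
      ring
    rw [h1, Complex.mul_im]
    simp only [Complex.ofReal_re, Complex.ofReal_im, mul_zero, add_zero, zero_add]
    apply mul_pos ?_ (by positivity)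
    set E : ℂ := ((θ:ℂ) * u + w i) * (starRingEnd ℂ) (u + w i) with hE
    set p := u.re; set q := u.im; set x := (w i).re; set y := (w i).im
    have hy : 0 < y := hw i
    have hEim : E.im = (1-θ)*(y*p - x*q) := by
      rw [hE]
      simp [Complex.mul_im, Complex.mul_re, Complex.add_re, Complex.add_im,
        Complex.conj_re, Complex.conj_im, Complex.ofReal_re, Complex.ofReal_im]
      ring
    have hEre : E.re = x^2+y^2+θ*(p^2+q^2)+(1+θ)*(x*p+y*q) := by
      rw [hE]
      simp [Complex.mul_im, Complex.mul_re, Complex.add_re, Complex.add_im,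
        Complex.conj_re, Complex.conj_im, Complex.ofReal_re, Complex.ofReal_im]
      ring
    have him : (lam * E).im = b * E.im + E.re := by
      rw [Complex.mul_im, hlam_re, hlam_im, one_mul]
    rw [him, hEim, hEre]
    have hq1 : (1:ℝ) - θ ≠ 0 := by linarith
    have hqne : q ≠ 0 := ne_of_gt hu
    have h2 : (b * ((1-θ)*(y*p - x*q)) + (x^2+y^2+θ*(p^2+q^2)+(1+θ)*(x*p+y*q))) * q
        = q*(x^2+y^2) + θ*q*(p^2+q^2) + (1+θ)*y*(p^2+q^2) := by
      rw [hb]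
      field_simp
      ring
    have hppq : 0 < p^2+q^2 := by positivity
    have hR : 0 < q*(x^2+y^2) + θ*q*(p^2+q^2) + (1+θ)*y*(p^2+q^2) := by positivity
    nlinarith [hR, h2, hu]
  have hne := hν.2 zp hkey
  have hprodne : (∏ i, (u + w i)) ≠ 0 := Finset.prod_ne_zero_iff.mpr (fun i _ => hden i)
  have hid : (∑ S ∈ Finset.powersetCard ℓ (Finset.univ : Finset (Fin n)),
        (ν S : ℂ) * ∏ i ∈ S, zp i) * ∏ i, (u + w i)
      = lam ^ ℓ * ∑ S ∈ Finset.powersetCard ℓ (Finset.univ : Finset (Fin n)),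
        (ν S : ℂ) * ∏ i, ((if i ∈ S then (θ:ℂ) else 1) * u + w i) := by
    rw [Finset.sum_mul, Finset.mul_sum]
    apply Finset.sum_congr rfl
    intro S hS
    have hcard : S.card = ℓ := (Finset.mem_powersetCard.mp hS).2
    have hsub : S ⊆ Finset.univ := Finset.subset_univ S
    have e1 : ∏ i, ((if i ∈ S then (θ:ℂ) else 1) * u + w i)
        = (∏ i ∈ Finset.univ \ S, (u + w i)) * ∏ i ∈ S, ((θ:ℂ)*u + w i) := by
      rw [← Finset.prod_sdiff hsub]
      congr 1
      · exact Finset.prod_congr rfl (fun i hi => by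
          rw [if_neg (Finset.mem_sdiff.mp hi).2, one_mul])
      · exact Finset.prod_congr rfl (fun i hi => by rw [if_pos hi])
    have e2 : ∏ i, (u + w i) = (∏ i ∈ Finset.univ \ S, (u + w i)) * ∏ i ∈ S, (u + w i) := by
      rw [Finset.prod_sdiff hsub]
    have e3 : (∏ i ∈ S, zp i) * ∏ i ∈ S, (u + w i) = lam ^ ℓ * ∏ i ∈ S, ((θ:ℂ)*u + w i) := by
      rw [← Finset.prod_mul_distrib]
      have : ∀ i ∈ S, zp i * (u + w i) = lam * ((θ:ℂ)*u + w i) := by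
        intro i _
        show lam * (((θ:ℂ) * u + w i) / (u + w i)) * (u + w i) = _
        rw [mul_assoc, div_mul_cancel₀ _ (hden i)]
      rw [Finset.prod_congr rfl this, Finset.prod_mul_distrib, Finset.prod_const, hcard]
    calc (ν S : ℂ) * (∏ i ∈ S, zp i) * ∏ i, (u + w i)
        = (ν S : ℂ) * (((∏ i ∈ S, zp i) * ∏ i ∈ S, (u + w i)) * ∏ i ∈ Finset.univ \ S, (u + w i)) := by
          rw [e2]; ring
      _ = (ν S : ℂ) * ((lam ^ ℓ * ∏ i ∈ S, ((θ:ℂ)*u + w i)) * ∏ i ∈ Finset.univ \ S, (u + w i)) := by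
          rw [e3]
      _ = lam ^ ℓ * ((ν S : ℂ) * ∏ i, ((if i ∈ S then (θ:ℂ) else 1) * u + w i)) := by
          rw [e1]; ring
  intro h
  rw [h, mul_zero] at hid
  exact mul_ne_zero hne hprodne hid


private lemma prod_ite_theta {n : ℕ} (S W : Finset (Fin n)) (θ : ℂ) :
    ∏ i ∈ (univ : Finset (Fin n)) \ W, (if i ∈ S then θ else 1) = θ ^ ((S \ W).card) := by
  rw [← Finset.prod_filter_mul_prod_filter_not ((univ : Finset (Fin n)) \ W) (· ∈ S)]
  have hf1 : Finset.filter (· ∈ S) ((univ : Finset (Fin n)) \ W) = S \ W := by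
    ext i
    simp [Finset.mem_sdiff, Finset.mem_filter, and_comm]
  have hA : ∏ i ∈ Finset.filter (· ∈ S) ((univ : Finset (Fin n)) \ W), (if i ∈ S then θ else 1)
      = θ ^ ((S \ W).card) := by
    rw [Finset.prod_congr rfl (fun i hi => if_pos (Finset.mem_filter.mp hi).2),
      Finset.prod_const, hf1]
  have hB : ∏ i ∈ Finset.filter (¬ · ∈ S) ((univ : Finset (Fin n)) \ W),
      (if i ∈ S then θ else 1) = 1 :=
    Finset.prod_eq_one (fun i hi => if_neg (Finset.mem_filter.mp hi).2)
  rw [hA, hB, mul_one]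

private lemma ident (n ℓ : ℕ) (ν : Finset (Fin n) → ℝ) (θ : ℝ) (μ : ℂ) (w : Fin n → ℂ) :
    (Polynomial.derivative^[n-ℓ] (∑ S ∈ Finset.powersetCard ℓ (univ : Finset (Fin n)),
        C ((ν S : ℂ)) * ∏ i, (C (if i ∈ S then (θ:ℂ) else 1) * X + C (w i)))).eval μ
    = ∑ S ∈ Finset.powersetCard ℓ (univ : Finset (Fin n)), (ν S : ℂ) *
        ∑ W ∈ (univ : Finset (Fin n)).powerset,
          (θ:ℂ)^((S \ W).card) * ((n - W.card).descFactorial (n-ℓ)) * μ^((n - W.card)-(n-ℓ))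
            * ∏ i ∈ W, w i := by
  rw [Polynomial.iterate_derivative_sum, Polynomial.eval_finset_sum]
  apply Finset.sum_congr rfl
  intro S _
  rw [Polynomial.iterate_derivative_C_mul, eval_mul, eval_C]
  congr 1
  have hexp : (∏ i, (C (if i ∈ S then (θ:ℂ) else 1) * X + C (w i)))
      = ∑ W ∈ (univ : Finset (Fin n)).powerset,
          C ((θ:ℂ)^((S\W).card) * ∏ i ∈ W, w i) * X^(n - W.card) := by
    have h1 : ∀ i : Fin n, C (if i ∈ S then (θ:ℂ) else 1) * X + C (w i)
        = C (w i) + C (if i ∈ S then (θ:ℂ) else 1) * X := fun i => add_comm _ _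
    simp_rw [h1]
    rw [Finset.prod_add]
    apply Finset.sum_congr rfl
    intro W hW
    have hWsub : W ⊆ univ := Finset.mem_powerset.mp hW
    have e1 : ∏ i ∈ W, C (w i) = C (∏ i ∈ W, w i) := by rw [map_prod]
    have e2 : ∏ i ∈ (univ : Finset (Fin n)) \ W, (C (if i ∈ S then (θ:ℂ) else 1) * X)
        = C ((θ:ℂ)^((S\W).card)) * X^(n - W.card) := by
      rw [Finset.prod_mul_distrib, Finset.prod_const, ← map_prod, prod_ite_theta]
      congr 2
      rw [Finset.card_sdiff_of_subset hWsub, Finset.card_univ, Fintype.card_fin]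
    rw [e1, e2, map_mul]
    ring
  rw [hexp, Polynomial.iterate_derivative_sum, Polynomial.eval_finset_sum]
  apply Finset.sum_congr rfl
  intro W _
  rw [Polynomial.iterate_derivative_C_mul, Polynomial.iterate_derivative_X_pow_eq_smul]
  simp only [eval_mul, eval_C, eval_smul, eval_pow, eval_X, smul_eq_mul, nsmul_eq_mul]
  ring


private noncomputable def qpol (n ℓ : ℕ) (ν : Finset (Fin n) → ℝ) (θ : ℝ) (w : Fin n → ℂ) : Polynomial ℂ :=
  ∑ S ∈ Finset.powersetCard ℓ (Finset.univ : Finset (Fin n)),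
    C ((ν S : ℂ)) * ∏ i, (C (if i ∈ S then (θ:ℂ) else 1) * X + C (w i))

private lemma qpol_prod_deg (n ℓ : ℕ) (θ : ℝ) (hθ0 : 0 < θ) (w : Fin n → ℂ)
    (S : Finset (Fin n)) (hS : S.card = ℓ) :
    (∏ i, (C (if i ∈ S then (θ:ℂ) else 1) * X + C (w i))).natDegree = n ∧
    (∏ i, (C (if i ∈ S then (θ:ℂ) else 1) * X + C (w i))).coeff n = (θ:ℂ) ^ ℓ := by
  have hc : ∀ i : Fin n, (if i ∈ S then (θ:ℂ) else 1) ≠ 0 := by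
    intro i
    split
    · exact_mod_cast ne_of_gt hθ0
    · exact one_ne_zero
  have hdeg1 : ∀ i : Fin n, (C (if i ∈ S then (θ:ℂ) else 1) * X + C (w i)).natDegree = 1 :=
    fun i => natDegree_linear (hc i)
  have hne : ∀ i ∈ (Finset.univ : Finset (Fin n)),
      (C (if i ∈ S then (θ:ℂ) else 1) * X + C (w i)) ≠ 0 := by
    intro i _ h
    have := hdeg1 i
    rw [h, natDegree_zero] at this
    exact one_ne_zero this.symm
  have hdeg : (∏ i, (C (if i ∈ S then (θ:ℂ) else 1) * X + C (w i))).natDegree = n := by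
    rw [Polynomial.natDegree_prod _ _ hne]
    simp [hdeg1]
  refine ⟨hdeg, ?_⟩
  have hlc : ∀ i : Fin n, (C (if i ∈ S then (θ:ℂ) else 1) * X + C (w i)).leadingCoeff
      = (if i ∈ S then (θ:ℂ) else 1) := by
    intro i
    rw [Polynomial.leadingCoeff, hdeg1 i]
    simp
  have h1 : (∏ i, (C (if i ∈ S then (θ:ℂ) else 1) * X + C (w i))).coeff n
      = (∏ i, (C (if i ∈ S then (θ:ℂ) else 1) * X + C (w i))).leadingCoeff := by
    rw [Polynomial.leadingCoeff, hdeg]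
  rw [h1, Polynomial.leadingCoeff_prod]
  have h2 := prod_ite_theta S ∅ (θ:ℂ)
  simp only [Finset.sdiff_empty, hS] at h2
  rw [Finset.prod_congr rfl (fun i _ => hlc i), h2]

private lemma qpol_natDegree_le (n ℓ : ℕ) (ν : Finset (Fin n) → ℝ) (θ : ℝ) (hθ0 : 0 < θ)
    (w : Fin n → ℂ) : (qpol n ℓ ν θ w).natDegree ≤ n := by
  unfold qpol
  apply Polynomial.natDegree_sum_le_of_forall_le
  intro S hS
  refine le_trans (Polynomial.natDegree_C_mul_le _ _) ?_
  rw [(qpol_prod_deg n ℓ θ hθ0 w S (Finset.mem_powersetCard.mp hS).2).1]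

private lemma qpol_coeff_n (n ℓ : ℕ) (ν : Finset (Fin n) → ℝ) (θ : ℝ) (hθ0 : 0 < θ)
    (w : Fin n → ℂ) : (qpol n ℓ ν θ w).coeff n
      = (θ:ℂ) ^ ℓ * ((∑ S ∈ Finset.powersetCard ℓ (Finset.univ : Finset (Fin n)), ν S : ℝ) : ℂ) := by
  unfold qpol
  rw [Polynomial.finset_sum_coeff]
  push_cast
  rw [Finset.mul_sum]
  apply Finset.sum_congr rfl
  intro S hS
  rw [Polynomial.coeff_C_mul, (qpol_prod_deg n ℓ θ hθ0 w S (Finset.mem_powersetCard.mp hS).2).2]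
  ring

private lemma qpol_eval_ne (n ℓ : ℕ) (ν : Finset (Fin n) → ℝ) (hν : StronglyRayleigh n ℓ ν)
    (θ : ℝ) (hθ0 : 0 < θ) (hθ1 : θ < 1) (w : Fin n → ℂ) (hw : ∀ i, 0 < (w i).im)
    (u : ℂ) (hu : 0 < u.im) : (qpol n ℓ ν θ w).eval u ≠ 0 := by
  unfold qpol
  rw [Polynomial.eval_finset_sum]
  simp only [eval_mul, eval_C, eval_prod, eval_add, eval_X]
  exact fstable n ℓ ν hν θ hθ0 hθ1 w hw u hu

private lemma identq (n ℓ : ℕ) (ν : Finset (Fin n) → ℝ) (θ : ℝ) (μ : ℂ) (w : Fin n → ℂ) :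
    (Polynomial.derivative^[n-ℓ] (qpol n ℓ ν θ w)).eval μ
    = ∑ S ∈ Finset.powersetCard ℓ (Finset.univ : Finset (Fin n)), (ν S : ℂ) *
        ∑ W ∈ (Finset.univ : Finset (Fin n)).powerset,
          (θ:ℂ)^((S \ W).card) * ((n - W.card).descFactorial (n-ℓ)) * μ^((n - W.card)-(n-ℓ))
            * ∏ i ∈ W, w i := ident n ℓ ν θ μ w

private lemma abs_multiset_prod_ge (δ : ℝ) (hδ : 0 ≤ δ) :
    ∀ (M : Multiset ℂ), (∀ r ∈ M, δ ≤ ‖r‖) →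
      δ ^ (Multiset.card M) ≤ ‖M.prod‖ := by
  intro M
  induction M using Multiset.induction_on with
  | empty => simp
  | cons a M ih =>
    intro h
    rw [Multiset.prod_cons, norm_mul, Multiset.card_cons, pow_succ, mul_comm (δ ^ _) δ,
      mul_comm ‖a‖ _]
    have h1 := ih (fun r hr => h r (Multiset.mem_cons_of_mem hr))
    have h2 := h a (Multiset.mem_cons_self a M)
    have : (0:ℝ) ≤ ‖M.prod‖ := norm_nonneg _
    nlinarith [pow_nonneg hδ (Multiset.card M)]

private lemma main_aux (n ℓ : ℕ) (hℓ1 : 1 ≤ ℓ) (hℓn : ℓ ≤ n)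
    (ν : Finset (Fin n) → ℝ) (hν : StronglyRayleigh n ℓ ν)
    (θ : ℝ) (hθ0 : 0 < θ) (hθ1 : θ < 1) :
    ∀ z : Fin n → ℂ, (∀ i, 0 < (z i).im) →
      (∑ W ∈ Finset.powersetCard ℓ (Finset.univ : Finset (Fin n)),
        ((∑ S ∈ Finset.powersetCard ℓ (Finset.univ : Finset (Fin n)),
          ν S * θ ^ ((S \ W).card) : ℝ) : ℂ) * ∏ i ∈ W, z i) ≠ 0 := by
  intro z hz hG
  classical
  set pc := Finset.powersetCard ℓ (Finset.univ : Finset (Fin n)) with hpc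
  -- total mass is positive
  set N := ∑ S ∈ pc, ν S with hN
  have hNpos : 0 < N := by
    have h1 := hν.2 (fun _ => Complex.I) (fun i => by simp)
    have h2 : (∑ S ∈ pc, (ν S : ℂ) * ∏ _i ∈ S, Complex.I) = (N : ℂ) * Complex.I ^ ℓ := by
      rw [hN]
      push_cast
      rw [Finset.sum_mul]
      apply Finset.sum_congr rfl
      intro S hS
      rw [Finset.prod_const, (Finset.mem_powersetCard.mp hS).2]
    have hNne : (N : ℂ) ≠ 0 := by
      intro h
      exact h1 (by rw [h2, h, zero_mul])
    have hNne' : N ≠ 0 := fun h => hNne (by exact_mod_cast h)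
    have hNnonneg : 0 ≤ N :=
      Finset.sum_nonneg (fun S hS => hν.1 S (Finset.mem_powersetCard.mp hS).2)
    exact lt_of_le_of_ne hNnonneg (Ne.symm hNne')
  have hn1 : 1 ≤ n := le_trans hℓ1 hℓn
  have hfin : Nonempty (Fin n) := ⟨⟨0, by omega⟩⟩
  obtain ⟨S₀, hS₀pc, hS₀pos⟩ : ∃ S₀ ∈ pc, 0 < ν S₀ := by
    by_contra h
    push_neg at h
    have : N ≤ 0 := by
      rw [hN]
      apply Finset.sum_nonpos
      intro S hS
      exact h S hS
    linarith
  -- minimum imaginary part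
  have hux : ((Finset.univ : Finset (Fin n)).image fun i => (z i).im).Nonempty :=
    ⟨(z (Classical.arbitrary (Fin n))).im, Finset.mem_image_of_mem _ (Finset.mem_univ _)⟩
  set δ := (((Finset.univ : Finset (Fin n)).image fun i => (z i).im).min' hux) with hδ
  have hδle : ∀ i, δ ≤ (z i).im := fun i =>
    Finset.min'_le _ _ (Finset.mem_image_of_mem _ (Finset.mem_univ i))
  have hδpos : 0 < δ := by
    obtain ⟨i, _, hi⟩ := Finset.mem_image.mp (Finset.min'_mem _ hux)
    rw [hδ, ← hi]
    exact hz i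
  set P := ∏ i, max 1 (‖z i‖) with hP
  have hP1 : (1:ℝ) ≤ P := by
    rw [hP]
    have := Finset.prod_le_prod (s := (Finset.univ : Finset (Fin n)))
      (f := fun _ => (1:ℝ)) (g := fun i => max 1 (‖z i‖))
      (fun i _ => zero_le_one) (fun i _ => le_max_left _ _)
    simpa using this
  set Ntil := ∑ W ∈ pc, (∑ S ∈ pc, ν S * θ ^ ((S \ W).card)) with hNtil
  have hpc_ne : pc.Nonempty := by
    rw [hpc]
    exact Finset.powersetCard_nonempty.mpr (by simpa using hℓn)
  have hinner_pos : ∀ W, 0 < ∑ S ∈ pc, ν S * θ ^ ((S \ W).card) := by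
    intro W
    apply Finset.sum_pos'
    · intro S hS
      exact mul_nonneg (hν.1 S (Finset.mem_powersetCard.mp hS).2) (by positivity)
    · exact ⟨S₀, hS₀pc, mul_pos hS₀pos (by positivity)⟩
  have hNtilpos : 0 < Ntil := Finset.sum_pos (fun W _ => hinner_pos W) hpc_ne
  set B := N * 2 ^ n * (n:ℝ) ^ n * P with hB
  have hBpos : 0 < B := by
    have hnn : (0:ℝ) < (n:ℝ) ^ n := by
      have : (0:ℝ) < (n:ℝ) := by exact_mod_cast hn1
      positivity
    have h2 : (0:ℝ) < 2 ^ n := by positivity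
    rw [hB]
    exact mul_pos (mul_pos (mul_pos hNpos h2) hnn) (lt_of_lt_of_le one_pos hP1)
  set D := ((n - ℓ).factorial : ℝ) * Ntil * δ ^ ℓ with hD
  have hDpos : 0 < D := by
    have : (0:ℝ) < ((n-ℓ).factorial : ℝ) := by exact_mod_cast (n-ℓ).factorial_pos
    positivity
  set lam := max 1 (B / D + 1) with hlam
  have hlam1 : (1:ℝ) ≤ lam := le_max_left _ _
  have hlampos : 0 < lam := lt_of_lt_of_le one_pos hlam1
  have hlamB : B < D * lam := by
    have h1 : B / D < lam := lt_of_lt_of_le (lt_add_one _) (le_max_right _ _)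
    calc B = D * (B / D) := by field_simp
    _ < D * lam := by exact mul_lt_mul_of_pos_left h1 hDpos
  set μ : ℂ := Complex.I * ((lam⁻¹ : ℝ) : ℂ) with hμ
  have hμim : 0 < μ.im := by
    rw [hμ]
    simp [Complex.mul_im]
    positivity
  have hμabs : ‖μ‖ = lam⁻¹ := by
    rw [hμ, norm_mul, Complex.norm_I, one_mul, Complex.norm_real, Real.norm_eq_abs,
      abs_of_pos (inv_pos.mpr hlampos)]
  set Λ : ℂ := Complex.I * ((lam : ℝ) : ℂ) with hΛ
  have hΛabs : ‖Λ‖ = lam := by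
    rw [hΛ, norm_mul, Complex.norm_I, one_mul, Complex.norm_real, Real.norm_eq_abs, abs_of_pos hlampos]
  have hΛne : Λ ≠ 0 := by
    intro h
    rw [h, norm_zero] at hΛabs
    linarith
  -- the e-coefficients
  set e : Finset (Fin n) → Finset (Fin n) → ℂ := fun S W =>
    (θ:ℂ) ^ ((S \ W).card) * (((n - W.card).descFactorial (n - ℓ) : ℕ) : ℂ)
      * μ ^ ((n - W.card) - (n - ℓ)) with he
  -- the auxiliary polynomial in the direction variable
  set ψ : Polynomial ℂ := ∑ S ∈ pc, C ((ν S : ℂ)) *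
      ∑ W ∈ (Finset.univ : Finset (Fin n)).powerset,
        C (Λ ^ ℓ * e S W) * ∏ i ∈ W, (X + C (z i)) with hψ
  have hNpos' : (0:ℝ) < ∑ S ∈ Finset.powersetCard ℓ (Finset.univ : Finset (Fin n)), ν S := by
    rw [← hpc, ← hN]
    exact hNpos
  have hF1 : ∀ t : ℂ, ψ.eval t
      = Λ ^ ℓ * (Polynomial.derivative^[n-ℓ] (qpol n ℓ ν θ (fun i => z i + t))).eval μ := by
    intro t
    rw [identq n ℓ ν θ μ (fun i => z i + t), hψ, Polynomial.eval_finset_sum, Finset.mul_sum]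
    rw [← hpc]
    apply Finset.sum_congr rfl
    intro S hS
    simp only [eval_mul, eval_C, Polynomial.eval_finset_sum, eval_prod, eval_add, eval_X]
    simp only [Finset.mul_sum]
    apply Finset.sum_congr rfl
    intro W hW
    have hprod : ∏ i ∈ W, (z i + t) = ∏ i ∈ W, (t + z i) :=
      Finset.prod_congr rfl (fun i _ => add_comm _ _)
    rw [hprod]
    simp only [he]
    ring
  have hF2 : ∀ t : ℂ, -δ < t.im → ψ.eval t ≠ 0 := by
    intro t ht
    have hw : ∀ i, 0 < ((fun i => z i + t) i).im := by
      intro i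
      simp only [Complex.add_im]
      have := hδle i
      linarith
    have hch := gl_chain (n - ℓ) (qpol n ℓ ν θ (fun i => z i + t)) n (by omega)
      (qpol_natDegree_le n ℓ ν θ hθ0 _)
      (by
        rw [qpol_coeff_n n ℓ ν θ hθ0]
        exact mul_ne_zero (pow_ne_zero _ (by exact_mod_cast ne_of_gt hθ0))
          (by exact_mod_cast ne_of_gt hNpos'))
      (qpol_eval_ne n ℓ ν hν θ hθ0 hθ1 _ hw)
    rw [hF1 t]
    exact mul_ne_zero (pow_ne_zero _ hΛne) (hch.2.2 μ hμim)
  have hmon : ∀ W : Finset (Fin n), (∏ i ∈ W, (X + C (z i))).Monic :=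
    fun W => monic_prod_of_monic _ _ (fun i _ => monic_X_add_C (z i))
  have hdegW : ∀ W : Finset (Fin n), (∏ i ∈ W, (X + C (z i))).natDegree = W.card := by
    intro W
    rw [Polynomial.natDegree_prod _ _ (fun i _ => (monic_X_add_C (z i)).ne_zero)]
    simp [Polynomial.natDegree_X_add_C]
  have hWle : ∀ W ∈ (Finset.univ : Finset (Fin n)).powerset, W.card ≤ n := by
    intro W hW
    have := Finset.card_le_card (Finset.mem_powerset.mp hW)
    simpa using this
  have hdesc0 : ∀ W ∈ (Finset.univ : Finset (Fin n)).powerset, ℓ < W.card →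
      ((n - W.card).descFactorial (n - ℓ) : ℂ) = 0 := by
    intro W hW hlt
    have h1 : (n - W.card).descFactorial (n - ℓ) = 0 := by
      rw [Nat.descFactorial_eq_zero_iff_lt]
      have := hWle W hW
      omega
    exact_mod_cast congrArg (Nat.cast (R := ℂ)) h1
  have hcoeffψ : ψ.coeff ℓ = Λ ^ ℓ * (((n-ℓ).factorial : ℕ) : ℂ) * ((Ntil : ℝ) : ℂ) := by
    rw [hψ, Polynomial.finset_sum_coeff]
    have hper : ∀ S ∈ pc, (C ((ν S:ℂ)) *
          ∑ W ∈ (Finset.univ : Finset (Fin n)).powerset,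
            C (Λ^ℓ * e S W) * ∏ i ∈ W, (X + C (z i))).coeff ℓ
        = (ν S : ℂ) * ∑ W ∈ Finset.powersetCard ℓ (Finset.univ : Finset (Fin n)),
            Λ^ℓ * ((θ:ℂ)^((S \ W).card) * (((n-ℓ).factorial : ℕ) : ℂ)) := by
      intro S _
      rw [Polynomial.coeff_C_mul, Polynomial.finset_sum_coeff]
      congr 1
      rw [Finset.powersetCard_eq_filter, Finset.sum_filter]
      apply Finset.sum_congr rfl
      intro W hW
      rw [Polynomial.coeff_C_mul]
      by_cases hc : W.card = ℓ
      · rw [if_pos hc]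
        have h1 : (∏ i ∈ W, (X + C (z i))).coeff ℓ = 1 := by
          have h2 := (hmon W).coeff_natDegree
          rwa [hdegW W, hc] at h2
        rw [h1, mul_one]
        simp only [he]
        rw [hc, Nat.sub_self, pow_zero, mul_one, Nat.descFactorial_self]
      · rw [if_neg hc]
        rcases lt_or_gt_of_ne hc with hlt | hgt
        · rw [Polynomial.coeff_eq_zero_of_natDegree_lt (by rw [hdegW W]; exact hlt), mul_zero]
        · simp only [he]
          rw [hdesc0 W hW hgt]
          ring
    rw [Finset.sum_congr rfl hper]
    have hcast : ((Ntil:ℝ):ℂ) = ∑ W ∈ pc, ∑ S ∈ pc, (ν S:ℂ) * (θ:ℂ)^((S \ W).card) := by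
      rw [hNtil]
      push_cast
      rfl
    rw [hcast, Finset.sum_comm, ← hpc]
    simp only [Finset.mul_sum]
    apply Finset.sum_congr rfl
    intro S _
    apply Finset.sum_congr rfl
    intro W _
    ring
  have hdegψ : ψ.natDegree ≤ ℓ := by
    rw [hψ]
    apply Polynomial.natDegree_sum_le_of_forall_le
    intro S _
    refine le_trans (Polynomial.natDegree_C_mul_le _ _) ?_
    apply Polynomial.natDegree_sum_le_of_forall_le
    intro W hW
    by_cases hc : W.card ≤ ℓ
    · refine le_trans (Polynomial.natDegree_C_mul_le _ _) ?_
      rw [hdegW W]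
      exact hc
    · have h0 : Λ^ℓ * e S W = 0 := by
        simp only [he]
        rw [hdesc0 W hW (by omega)]
        ring
      rw [h0, map_zero, zero_mul]
      simp
  have hlead_ne : ψ.coeff ℓ ≠ 0 := by
    rw [hcoeffψ]
    refine mul_ne_zero (mul_ne_zero (pow_ne_zero _ hΛne) ?_) ?_
    · exact_mod_cast Nat.factorial_ne_zero _
    · exact_mod_cast ne_of_gt hNtilpos
  have hψdeg : ψ.natDegree = ℓ := le_antisymm hdegψ (Polynomial.le_natDegree_of_ne_zero hlead_ne)
  have hψne : ψ ≠ 0 := fun h => hlead_ne (by rw [h]; simp)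
  have hsplits : ψ.Splits := IsAlgClosed.splits ψ
  have hrootscard : (ψ.roots).card = ℓ := by
    have h1 := hsplits.natDegree_eq_card_roots
    rw [← h1, hψdeg]
  have hroots_abs : ∀ r ∈ ψ.roots, δ ≤ ‖r‖ := by
    intro r hr
    have hre : ψ.eval r = 0 := (Polynomial.mem_roots hψne).mp hr
    have him : r.im ≤ -δ := by
      by_contra h
      push_neg at h
      exact hF2 r (by linarith) hre
    calc δ ≤ -r.im := by linarith
    _ ≤ |r.im| := neg_le_abs _
    _ ≤ ‖r‖ := Complex.abs_im_le_norm r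
  have hfact := Polynomial.C_leadingCoeff_mul_prod_multiset_X_sub_C
    (p := ψ) (by rw [hrootscard, hψdeg])
  have heval0 : ψ.eval 0 = ψ.leadingCoeff * (ψ.roots.map (fun r => -r)).prod := by
    conv_lhs => rw [← hfact]
    rw [eval_mul, eval_C, Polynomial.eval_multiset_prod]
    congr 1
    rw [Multiset.map_map]
    have hfeq : (eval 0 ∘ fun a : ℂ => X - C a) = fun r : ℂ => -r := funext fun r => by simp
    rw [hfeq]
  have hlower : lam^(ℓ-1) * (D * lam) ≤ ‖ψ.eval 0‖ := by
    have hleadabs : ‖ψ.leadingCoeff‖ = lam^ℓ * (((n-ℓ).factorial : ℕ) : ℝ) * Ntil := by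
      rw [Polynomial.leadingCoeff, hψdeg, hcoeffψ, norm_mul, norm_mul, norm_pow, hΛabs,
        Complex.norm_natCast, Complex.norm_real, Real.norm_eq_abs, abs_of_pos hNtilpos]
    have hprodge : δ^ℓ ≤ ‖(ψ.roots.map (fun r => -r)).prod‖ := by
      have hmem : ∀ r ∈ ψ.roots.map (fun r : ℂ => -r), δ ≤ ‖r‖ := by
        intro r hr
        obtain ⟨r', hr', rfl⟩ := Multiset.mem_map.mp hr
        rw [norm_neg]
        exact hroots_abs r' hr'
      have h1 := abs_multiset_prod_ge δ (le_of_lt hδpos) (ψ.roots.map (fun r => -r)) hmem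
      rwa [Multiset.card_map, hrootscard] at h1
    have hfpos : (0:ℝ) < (((n-ℓ).factorial : ℕ) : ℝ) := by exact_mod_cast (n-ℓ).factorial_pos
    have hΛl : lam^(ℓ-1) * (D * lam) = (lam^ℓ * (((n-ℓ).factorial : ℕ):ℝ) * Ntil) * δ^ℓ := by
      have h2 : lam^(ℓ-1) * lam = lam^ℓ := by
        rw [← pow_succ]
        congr 1
        omega
      rw [hD, ← h2]
      ring
    rw [heval0, norm_mul, hleadabs, hΛl]
    apply mul_le_mul_of_nonneg_left hprodge (by positivity)
  set fns := (Finset.univ : Finset (Fin n)).powerset.filter (fun W => ¬ W.card = ℓ) with hfns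
  have hsplit : ∀ (f : Finset (Fin n) → ℂ), ∑ W ∈ (Finset.univ : Finset (Fin n)).powerset, f W
      = (∑ W ∈ pc, f W) + ∑ W ∈ fns, f W := by
    intro f
    rw [hpc, Finset.powersetCard_eq_filter, hfns]
    exact (Finset.sum_filter_add_sum_filter_not _ _ f).symm
  have heval0' : ψ.eval 0 = ∑ S ∈ pc, (ν S:ℂ) *
      ∑ W ∈ (Finset.univ : Finset (Fin n)).powerset, (Λ^ℓ * e S W) * ∏ i ∈ W, z i := by
    rw [hψ, Polynomial.eval_finset_sum]
    apply Finset.sum_congr rfl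
    intro S _
    simp only [eval_mul, eval_C, Polynomial.eval_finset_sum, eval_prod, eval_add, eval_X, zero_add]
  have heval0'' : ψ.eval 0 = (∑ S ∈ pc, (ν S:ℂ) * ∑ W ∈ pc, (Λ^ℓ * e S W) * ∏ i ∈ W, z i)
      + ∑ S ∈ pc, (ν S:ℂ) * ∑ W ∈ fns, (Λ^ℓ * e S W) * ∏ i ∈ W, z i := by
    rw [heval0', ← Finset.sum_add_distrib]
    apply Finset.sum_congr rfl
    intro S _
    rw [hsplit]
    ring
  have hA : (∑ S ∈ pc, (ν S:ℂ) * ∑ W ∈ pc, (Λ^ℓ * e S W) * ∏ i ∈ W, z i) = 0 := by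
    have h1 : (∑ S ∈ pc, (ν S:ℂ) * ∑ W ∈ pc, (Λ^ℓ * e S W) * ∏ i ∈ W, z i)
        = Λ^ℓ * (((n-ℓ).factorial : ℕ):ℂ) *
          ∑ W ∈ pc, ((∑ S ∈ pc, ν S * θ ^ ((S \ W).card) : ℝ) : ℂ) * ∏ i ∈ W, z i := by
      simp only [Finset.mul_sum]
      rw [Finset.sum_comm]
      apply Finset.sum_congr rfl
      intro W hW
      have hcW : W.card = ℓ := (Finset.mem_powersetCard.mp (by rwa [← hpc])).2
      push_cast
      rw [Finset.sum_mul]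
      simp only [Finset.mul_sum]
      apply Finset.sum_congr rfl
      intro S _
      simp only [he]
      rw [hcW, Nat.sub_self, pow_zero, Nat.descFactorial_self]
      ring
    rw [h1, hG, mul_zero]
  have hbound : ∀ S ∈ pc, ∀ W ∈ fns,
      ‖(Λ^ℓ * e S W) * ∏ i ∈ W, z i‖ ≤ (n:ℝ)^n * P * lam^(ℓ-1) := by
    intro S hS W hW
    have hWp : W ∈ (Finset.univ : Finset (Fin n)).powerset := (Finset.mem_filter.mp hW).1
    have hWne : ¬ W.card = ℓ := (Finset.mem_filter.mp hW).2
    have hWn : W.card ≤ n := hWle W hWp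
    have hbnd_pos : (0:ℝ) ≤ (n:ℝ)^n * P * lam^(ℓ-1) := by positivity
    rcases lt_or_gt_of_ne hWne with hlt | hgt
    · -- W.card < ℓ
      have hj : (n - W.card) - (n - ℓ) = ℓ - W.card := by omega
      have habs : ‖(Λ^ℓ * e S W) * ∏ i ∈ W, z i‖
          = (lam^ℓ * (lam⁻¹)^(ℓ - W.card)) *
            (θ^((S \ W).card) * ((((n - W.card).descFactorial (n-ℓ) : ℕ):ℝ)
              * ‖∏ i ∈ W, z i‖)) := by
        simp only [he, norm_mul, norm_pow, hΛabs, hμabs, Complex.norm_real, Real.norm_eq_abs, Complex.norm_natCast]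
        rw [abs_of_pos hθ0, hj]
        ring
      have hf3 : lam^ℓ * (lam⁻¹)^(ℓ - W.card) ≤ lam^(ℓ-1) := by
        have h2 : lam^ℓ * (lam⁻¹)^(ℓ - W.card) = lam^(W.card) := by
          have h3 : lam^ℓ = lam^(ℓ - W.card) * lam^(W.card) := by
            rw [← pow_add]
            congr 1
            omega
          rw [h3, inv_pow]
          field_simp
        rw [h2]
        exact pow_le_pow_right₀ hlam1 (by omega)
      have hf1 : θ^((S \ W).card) ≤ 1 := pow_le_one₀ (le_of_lt hθ0) (le_of_lt hθ1)
      have hf2 : ((((n - W.card).descFactorial (n-ℓ) : ℕ)):ℝ) ≤ (n:ℝ)^n := by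
        have d1 : (n - W.card).descFactorial (n-ℓ) ≤ (n - W.card)^(n-ℓ) :=
          Nat.descFactorial_le_pow _ _
        have d2 : (n - W.card)^(n-ℓ) ≤ n^(n-ℓ) := Nat.pow_le_pow_left (by omega) _
        have d3 : n^(n-ℓ) ≤ n^n := Nat.pow_le_pow_right (by omega) (by omega)
        exact_mod_cast le_trans d1 (le_trans d2 d3)
      have hf4 : ‖∏ i ∈ W, z i‖ ≤ P := by
        rw [norm_prod]
        have s1 : ∏ i ∈ W, ‖z i‖ ≤ ∏ i ∈ W, max 1 (‖z i‖) :=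
          Finset.prod_le_prod (fun i _ => norm_nonneg _)
            (fun i _ => le_max_right _ _)
        have s2 : ∏ i ∈ W, max 1 (‖z i‖) ≤ P := by
          have hone : (1:ℝ) ≤ ∏ i ∈ (Finset.univ : Finset (Fin n)) \ W, max 1 (‖z i‖) := by
            have := Finset.prod_le_prod (s := (Finset.univ : Finset (Fin n)) \ W)
              (f := fun _ => (1:ℝ)) (g := fun i => max 1 (‖z i‖))
              (fun i _ => zero_le_one) (fun i _ => le_max_left _ _)
            simpa using this
          have hnn : (0:ℝ) ≤ ∏ i ∈ W, max 1 (‖z i‖) :=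
            Finset.prod_nonneg (fun i _ => le_trans zero_le_one (le_max_left _ _))
          have hsd : P = (∏ i ∈ (Finset.univ : Finset (Fin n)) \ W, max 1 (‖z i‖))
              * ∏ i ∈ W, max 1 (‖z i‖) := by
            rw [hP, Finset.prod_sdiff (Finset.subset_univ W)]
          rw [hsd]
          exact le_mul_of_one_le_left hnn hone
        linarith
      calc ‖(Λ^ℓ * e S W) * ∏ i ∈ W, z i‖
          = (lam^ℓ * (lam⁻¹)^(ℓ - W.card)) *
            (θ^((S \ W).card) * ((((n - W.card).descFactorial (n-ℓ) : ℕ):ℝ)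
              * ‖∏ i ∈ W, z i‖)) := habs
      _ ≤ lam^(ℓ-1) * (1 * ((n:ℝ)^n * P)) := by
          apply mul_le_mul hf3 ?_ ?_ (by positivity)
          · apply mul_le_mul hf1 ?_ ?_ zero_le_one
            · apply mul_le_mul hf2 hf4 (norm_nonneg _) (by positivity)
            · positivity
          · positivity
      _ = (n:ℝ)^n * P * lam^(ℓ-1) := by ring
    · -- ℓ < W.card : coefficient is zero
      have h0 : (Λ^ℓ * e S W) = 0 := by
        simp only [he]
        rw [hdesc0 W hWp hgt]
        ring
      rw [h0, zero_mul, norm_zero]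
      exact hbnd_pos
  have hT2 : ‖∑ S ∈ pc, (ν S:ℂ) * ∑ W ∈ fns, (Λ^ℓ * e S W) * ∏ i ∈ W, z i‖
      ≤ B * lam^(ℓ-1) := by
    calc ‖∑ S ∈ pc, (ν S:ℂ) * ∑ W ∈ fns, (Λ^ℓ * e S W) * ∏ i ∈ W, z i‖
        ≤ ∑ S ∈ pc, ‖(ν S:ℂ) * ∑ W ∈ fns, (Λ^ℓ * e S W) * ∏ i ∈ W, z i‖ :=
          norm_sum_le _ _
    _ ≤ ∑ S ∈ pc, ν S * (2^n * ((n:ℝ)^n * P * lam^(ℓ-1))) := by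
        apply Finset.sum_le_sum
        intro S hS
        rw [norm_mul, Complex.norm_real, Real.norm_eq_abs,
          abs_of_nonneg (hν.1 S (Finset.mem_powersetCard.mp (by rwa [← hpc])).2)]
        apply mul_le_mul_of_nonneg_left ?_ (hν.1 S (Finset.mem_powersetCard.mp (by rwa [← hpc])).2)
        calc ‖∑ W ∈ fns, (Λ^ℓ * e S W) * ∏ i ∈ W, z i‖
            ≤ ∑ W ∈ fns, ‖(Λ^ℓ * e S W) * ∏ i ∈ W, z i‖ :=
              norm_sum_le _ _
        _ ≤ ∑ W ∈ fns, (n:ℝ)^n * P * lam^(ℓ-1) :=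
              Finset.sum_le_sum (fun W hW => hbound S hS W hW)
        _ = (fns.card : ℝ) * ((n:ℝ)^n * P * lam^(ℓ-1)) := by
              rw [Finset.sum_const, nsmul_eq_mul]
        _ ≤ 2^n * ((n:ℝ)^n * P * lam^(ℓ-1)) := by
              apply mul_le_mul_of_nonneg_right ?_ (by positivity)
              have hc1 : fns.card ≤ 2^n := by
                rw [hfns]
                calc (Finset.filter _ _).card ≤ (Finset.univ : Finset (Fin n)).powerset.card :=
                  Finset.card_filter_le _ _
                _ = 2^n := by rw [Finset.card_powerset, Finset.card_univ, Fintype.card_fin]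
              exact_mod_cast hc1
    _ = B * lam^(ℓ-1) := by
        rw [← Finset.sum_mul, ← hN, hB]
        ring
  have hfinal : lam^(ℓ-1) * (D * lam) ≤ lam^(ℓ-1) * B := by
    calc lam^(ℓ-1) * (D * lam) ≤ ‖ψ.eval 0‖ := hlower
    _ = ‖∑ S ∈ pc, (ν S:ℂ) * ∑ W ∈ fns, (Λ^ℓ * e S W) * ∏ i ∈ W, z i‖ := by
        rw [heval0'', hA, zero_add]
    _ ≤ B * lam^(ℓ-1) := hT2
    _ = lam^(ℓ-1) * B := by ring
  have hDl : D * lam ≤ B := le_of_mul_le_mul_left hfinal (by positivity)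
  linarith





theorem stmt1 (n ℓ : ℕ) (hℓ1 : 1 ≤ ℓ) (hℓn : ℓ ≤ n)
    (ν : Finset (Fin n) → ℝ) (hν : StronglyRayleigh n ℓ ν)
    (ε : ℝ) (hε : 0 < ε) :
    ∃ νt : Finset (Fin n) → ℝ, StronglyRayleigh n ℓ νt ∧
      (∀ S : Finset (Fin n), S.card = ℓ → 0 < νt S) ∧
      (∀ S : Finset (Fin n), S.card = ℓ → |ν S - νt S| ≤ ε) := by
  classical
  set pc := Finset.powersetCard ℓ (Finset.univ : Finset (Fin n)) with hpc
  set N := ∑ S ∈ pc, ν S with hN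
  have hNnonneg : 0 ≤ N :=
    Finset.sum_nonneg (fun S hS => hν.1 S (Finset.mem_powersetCard.mp hS).2)
  have hNpos : 0 < N := by
    have h1 := hν.2 (fun _ => Complex.I) (fun i => by simp)
    have h2 : (∑ S ∈ pc, (ν S : ℂ) * ∏ _i ∈ S, Complex.I) = (N : ℂ) * Complex.I ^ ℓ := by
      rw [hN]
      push_cast
      rw [Finset.sum_mul]
      apply Finset.sum_congr rfl
      intro S hS
      rw [Finset.prod_const, (Finset.mem_powersetCard.mp hS).2]
    have hNne : (N : ℂ) ≠ 0 := fun h => h1 (by rw [h2, h, zero_mul])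
    have hNne' : N ≠ 0 := fun h => hNne (by exact_mod_cast h)
    exact lt_of_le_of_ne hNnonneg (Ne.symm hNne')
  obtain ⟨S₀, hS₀pc, hS₀pos⟩ : ∃ S₀ ∈ pc, 0 < ν S₀ := by
    by_contra h
    push_neg at h
    have : N ≤ 0 := by
      rw [hN]
      exact Finset.sum_nonpos (fun S hS => h S hS)
    linarith
  set θ := min (1/2 : ℝ) (ε / (N + 1)) with hθ
  have hθ0 : 0 < θ := lt_min (by norm_num) (by positivity)
  have hθ1 : θ < 1 := lt_of_le_of_lt (min_le_left _ _) (by norm_num)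
  have hθε : θ * (N + 1) ≤ ε := by
    have h1 : θ ≤ ε / (N + 1) := min_le_right _ _
    have h2 : (0:ℝ) < N + 1 := by linarith
    calc θ * (N + 1) ≤ (ε / (N + 1)) * (N + 1) := by
          exact mul_le_mul_of_nonneg_right h1 (le_of_lt h2)
    _ = ε := by field_simp
  refine ⟨fun T => ∑ S ∈ pc, ν S * θ ^ ((S \ T).card), ⟨?_, ?_⟩, ?_, ?_⟩
  · intro T _
    exact Finset.sum_nonneg (fun S hS =>
      mul_nonneg (hν.1 S (Finset.mem_powersetCard.mp hS).2) (by positivity))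
  · intro z hz
    exact main_aux n ℓ hℓ1 hℓn ν hν θ hθ0 hθ1 z hz
  · intro T _
    exact Finset.sum_pos'
      (fun S hS => mul_nonneg (hν.1 S (Finset.mem_powersetCard.mp hS).2) (by positivity))
      ⟨S₀, hS₀pc, mul_pos hS₀pos (by positivity)⟩
  · intro T hT
    have hTpc : T ∈ pc := Finset.mem_powersetCard.mpr ⟨Finset.subset_univ T, hT⟩
    have hsplit : ∑ S ∈ pc, ν S * θ ^ ((S \ T).card)
        = (∑ S ∈ pc \ {T}, ν S * θ ^ ((S \ T).card)) + ν T := by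
      rw [Finset.sum_eq_sum_sdiff_singleton_add hTpc]
      congr 1
      rw [Finset.sdiff_self]
      simp
    set R := ∑ S ∈ pc \ {T}, ν S * θ ^ ((S \ T).card) with hR
    have hR0 : 0 ≤ R :=
      Finset.sum_nonneg (fun S hS =>
        mul_nonneg (hν.1 S (Finset.mem_powersetCard.mp (Finset.mem_sdiff.mp hS).1).2)
          (by positivity))
    have hRle : R ≤ θ * N := by
      have hper : ∀ S ∈ pc \ {T}, ν S * θ ^ ((S \ T).card) ≤ ν S * θ := by
        intro S hS
        obtain ⟨hSpc, hSne⟩ := Finset.mem_sdiff.mp hS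
        have hcS : S.card = ℓ := (Finset.mem_powersetCard.mp hSpc).2
        have hSne' : S ≠ T := by simpa using hSne
        have hc1 : 1 ≤ (S \ T).card := by
          rw [Nat.one_le_iff_ne_zero]
          intro h0
          have hsub : S ⊆ T := by
            intro x hx
            by_contra hxT
            have : x ∈ S \ T := Finset.mem_sdiff.mpr ⟨hx, hxT⟩
            have := Finset.card_pos.mpr ⟨x, this⟩
            omega
          exact hSne' (Finset.eq_of_subset_of_card_le hsub (by rw [hcS, hT]))
        have hpow : θ ^ ((S \ T).card) ≤ θ := by
          have := pow_le_pow_of_le_one (le_of_lt hθ0) (le_of_lt hθ1) hc1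
          simpa using this
        exact mul_le_mul_of_nonneg_left hpow (hν.1 S hcS)
      calc R ≤ ∑ S ∈ pc \ {T}, ν S * θ := Finset.sum_le_sum hper
      _ = θ * ∑ S ∈ pc \ {T}, ν S := by rw [← Finset.sum_mul]; ring
      _ ≤ θ * N := by
          apply mul_le_mul_of_nonneg_left ?_ (le_of_lt hθ0)
          rw [hN]
          exact Finset.sum_le_sum_of_subset_of_nonneg (Finset.sdiff_subset)
            (fun S hS _ => hν.1 S (Finset.mem_powersetCard.mp hS).2)
    show |ν T - ∑ S ∈ pc, ν S * θ ^ ((S \ T).card)| ≤ ε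
    rw [hsplit]
    have habs : |ν T - (R + ν T)| = R := by
      rw [abs_sub_comm]
      rw [show R + ν T - ν T = R by ring, abs_of_nonneg hR0]
    rw [habs]
    nlinarith [hθ0]
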